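/- Let d ≥ 4 be an even integer and let n be an even positive integer. Then Q_{d−1}^{(2)}(n) ≥ Q_d^{(2)}(n). -/
import Mathlib


/-- `QNum b d n` is the number of partitions of `n` into parts congruent to
`b` or `-b` modulo `d + 3`. -/
noncomputable def QNum (b d n : ℕ) : ℕ :=
  Nat.card {p : n.Partition //
    ∀ x ∈ p.parts, x % (d + 3) = b % (d + 3) ∨ (x + b) % (d + 3) = 0}

namespace QShiftAux

/-- amount subtracted from a part -/
def kk (M x : ℕ) : ℕ := if x % M = 2 then x / M else (x + 2) / M

/-- the image of a part -/
def gg (M x : ℕ) : ℕ := x - kk M x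

/-- left inverse of `gg` -/
def hh (M v : ℕ) : ℕ :=
  if v % (M - 1) = 2 then M * (v / (M - 1)) + 2 else M * ((v + 2) / (M - 1)) - 2

lemma cases_allowed {M x : ℕ} (hM : 7 ≤ M) (hpos : 0 < x)
    (hx : x % M = 2 % M ∨ (x + 2) % M = 0) :
    (∃ q, x = M * q + 2 ∧ kk M x = q ∧ gg M x = (M - 1) * q + 2) ∨
    (∃ q, 1 ≤ q ∧ x = M * q - 2 ∧ kk M x = q ∧ gg M x = (M - 1) * q - 2) := by
  have h2 : (2:ℕ) % M = 2 := Nat.mod_eq_of_lt (by omega)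
  rcases hx with hx | hx
  · rw [h2] at hx
    left
    have hd := Nat.div_add_mod x M
    have h1 : (M - 1) * (x / M) = M * (x / M) - x / M := by
      rw [Nat.sub_mul, one_mul]
    have h3 : x / M ≤ M * (x / M) := Nat.le_mul_of_pos_left _ (by omega)
    refine ⟨x / M, by omega, ?_, ?_⟩
    · simp [kk, hx]
    · simp only [gg, kk, if_pos hx]
      omega
  · have hne : x % M ≠ 2 := by
      intro h
      rw [Nat.add_mod, h, h2] at hx
      have h4 : (2 + 2) % M = 4 := Nat.mod_eq_of_lt (by omega)
      rw [h4] at hx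
      exact absurd hx (by norm_num)
    right
    have hd := Nat.div_add_mod (x + 2) M
    have hxq : x + 2 = M * ((x + 2) / M) := by omega
    have hq1 : 1 ≤ (x + 2) / M := by
      rcases Nat.eq_zero_or_pos ((x + 2) / M) with h | h
      · rw [h, Nat.mul_zero] at hxq; omega
      · exact h
    have h1 : (M - 1) * ((x + 2) / M) = M * ((x + 2) / M) - (x + 2) / M := by
      rw [Nat.sub_mul, one_mul]
    have h3 : M * 1 ≤ M * ((x + 2) / M) := Nat.mul_le_mul_left M hq1
    have h5 : (x + 2) / M ≤ M * ((x + 2) / M) := Nat.le_mul_of_pos_left _ (by omega)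
    refine ⟨(x + 2) / M, hq1, by omega, ?_, ?_⟩
    · simp [kk, hne]
    · simp only [gg, kk, if_neg hne]
      omega

lemma kk_le {M x : ℕ} (hM : 7 ≤ M) : kk M x ≤ x := by
  unfold kk
  split
  · exact Nat.div_le_self _ _
  · rcases Nat.eq_zero_or_pos x with rfl | hx
    · simp [Nat.div_eq_of_lt (by omega : 0 + 2 < M)]
    · have h1 : (x + 2) / M < x + 1 := by
        rw [Nat.div_lt_iff_lt_mul (by omega : 0 < M)]
        have h7 : (x + 1) * 7 ≤ (x + 1) * M := Nat.mul_le_mul_left _ hM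
        omega
      omega

lemma gg_two {M : ℕ} (hM : 7 ≤ M) : gg M 2 = 2 := by
  unfold gg kk
  rw [if_pos (Nat.mod_eq_of_lt (by omega)), Nat.div_eq_of_lt (by omega)]

lemma kk_two {M : ℕ} (hM : 7 ≤ M) : kk M 2 = 0 := by
  unfold kk
  rw [if_pos (Nat.mod_eq_of_lt (by omega)), Nat.div_eq_of_lt (by omega)]

lemma gg_pos {M x : ℕ} (hM : 7 ≤ M) (hpos : 0 < x)
    (hx : x % M = 2 % M ∨ (x + 2) % M = 0) : 0 < gg M x := by
  rcases cases_allowed hM hpos hx with ⟨q, _, _, hg⟩ | ⟨q, hq, _, _, hg⟩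
  · omega
  · have h6 : 6 * 1 ≤ (M - 1) * q := Nat.mul_le_mul (by omega) hq
    omega

lemma gg_even {M x : ℕ} (hM : 7 ≤ M) (hMo : M % 2 = 1) (hpos : 0 < x)
    (hx : x % M = 2 % M ∨ (x + 2) % M = 0) : gg M x % 2 = 0 := by
  have he : (M - 1) % 2 = 0 := by omega
  rcases cases_allowed hM hpos hx with ⟨q, _, _, hg⟩ | ⟨q, hq, _, _, hg⟩
  · have hm := Nat.mul_mod (M - 1) q 2
    rw [he] at hm
    simp at hm
    omega
  · have hm := Nat.mul_mod (M - 1) q 2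
    rw [he] at hm
    simp at hm
    have h6 : 6 * 1 ≤ (M - 1) * q := Nat.mul_le_mul (by omega) hq
    omega

lemma gg_mod {M x : ℕ} (hM : 7 ≤ M) (hpos : 0 < x)
    (hx : x % M = 2 % M ∨ (x + 2) % M = 0) :
    gg M x % (M - 1) = 2 % (M - 1) ∨ (gg M x + 2) % (M - 1) = 0 := by
  rcases cases_allowed hM hpos hx with ⟨q, _, _, hg⟩ | ⟨q, hq, _, _, hg⟩
  · left
    rw [hg, Nat.mul_add_mod]
  · right
    have h6 : 6 * 1 ≤ (M - 1) * q := Nat.mul_le_mul (by omega) hq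
    have : gg M x + 2 = (M - 1) * q := by omega
    rw [this, Nat.mul_mod_right]

lemma gg_eq_two_iff {M x : ℕ} (hM : 7 ≤ M) (hpos : 0 < x)
    (hx : x % M = 2 % M ∨ (x + 2) % M = 0) : gg M x = 2 ↔ x = 2 := by
  constructor
  · intro h
    rcases cases_allowed hM hpos hx with ⟨q, hxe, _, hg⟩ | ⟨q, hq, _, _, hg⟩
    · have hq0 : (M - 1) * q = 0 := by omega
      rcases Nat.mul_eq_zero.mp hq0 with h' | h'
      · omega
      · rw [h', Nat.mul_zero] at hxe; omega
    · have h6 : 6 * 1 ≤ (M - 1) * q := Nat.mul_le_mul (by omega) hq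
      omega
  · rintro rfl
    exact gg_two hM

lemma hh_gg {M x : ℕ} (hM : 7 ≤ M) (hpos : 0 < x)
    (hx : x % M = 2 % M ∨ (x + 2) % M = 0) : hh M (gg M x) = x := by
  rcases cases_allowed hM hpos hx with ⟨q, hxe, _, hg⟩ | ⟨q, hq, hxe, _, hg⟩
  · unfold hh
    rw [hg]
    have hmod : ((M - 1) * q + 2) % (M - 1) = 2 := by
      rw [Nat.mul_add_mod]; exact Nat.mod_eq_of_lt (by omega)
    rw [if_pos hmod]
    have hdiv : ((M - 1) * q + 2) / (M - 1) = q := by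
      rw [Nat.mul_add_div (by omega : 0 < M - 1), Nat.div_eq_of_lt (by omega)]
      omega
    rw [hdiv]
    omega
  · unfold hh
    rw [hg]
    have hge : (M - 1) * 1 ≤ (M - 1) * q := Nat.mul_le_mul_left _ hq
    rw [Nat.mul_one] at hge
    have h1 : (M - 1) * (q - 1) = (M - 1) * q - (M - 1) := by
      rw [Nat.mul_sub, Nat.mul_one]
    have hsplit : (M - 1) * q - 2 = (M - 1) * (q - 1) + (M - 3) := by omega
    have hmod : ((M - 1) * q - 2) % (M - 1) = M - 3 := by
      rw [hsplit, Nat.mul_add_mod]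
      exact Nat.mod_eq_of_lt (by omega)
    rw [hmod, if_neg (by omega : ¬ M - 3 = 2)]
    have h2 : (M - 1) * q - 2 + 2 = (M - 1) * q := by omega
    rw [h2, Nat.mul_div_cancel_left _ (by omega : 0 < M - 1)]
    omega

lemma even_sum {s : Multiset ℕ} (h : ∀ x ∈ s, x % 2 = 0) : s.sum % 2 = 0 := by
  induction s using Multiset.induction with
  | empty => simp
  | cons a s ih =>
    rw [Multiset.sum_cons]
    have h1 := h a (Multiset.mem_cons_self a s)
    have h2 := ih fun x hx => h x (Multiset.mem_cons_of_mem hx)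
    omega

lemma sum_map_gg_add {M : ℕ} (hM : 7 ≤ M) (s : Multiset ℕ) :
    (s.map (gg M)).sum + (s.map (kk M)).sum = s.sum := by
  induction s using Multiset.induction with
  | empty => simp
  | cons a s ih =>
    simp only [Multiset.map_cons, Multiset.sum_cons]
    have h := kk_le (M := M) (x := a) hM
    have h2 : gg M a + kk M a = a := by unfold gg; omega
    omega

lemma key (M n : ℕ) (hM : 7 ≤ M) (hMo : M % 2 = 1) (hne : n % 2 = 0) :
    Nat.card {p : n.Partition //
        ∀ x ∈ p.parts, x % M = 2 % M ∨ (x + 2) % M = 0} ≤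
    Nat.card {p : n.Partition //
        ∀ x ∈ p.parts, x % (M - 1) = 2 % (M - 1) ∨ (x + 2) % (M - 1) = 0} := by
  classical
  set P : n.Partition → Prop :=
    fun p => ∀ x ∈ p.parts, x % M = 2 % M ∨ (x + 2) % M = 0 with hP
  let img : n.Partition → Multiset ℕ := fun q =>
    q.parts.map (gg M) + Multiset.replicate ((q.parts.map (kk M)).sum / 2) 2
  have hKn : ∀ p : n.Partition, P p →
      (p.parts.map (kk M)).sum % 2 = 0 ∧
      (p.parts.map (gg M)).sum + (p.parts.map (kk M)).sum = n := by
    intro p hp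
    have hsum := sum_map_gg_add hM p.parts
    rw [p.parts_sum] at hsum
    have hgev : (p.parts.map (gg M)).sum % 2 = 0 := by
      apply even_sum
      intro x hx
      obtain ⟨y, hy, rfl⟩ := Multiset.mem_map.mp hx
      exact gg_even hM hMo (p.parts_pos hy) (hp y hy)
    exact ⟨by omega, hsum⟩
  have himg_sum : ∀ p : n.Partition, P p → (img p).sum = n := by
    intro p hp
    obtain ⟨hk2, hkn⟩ := hKn p hp
    simp only [img, Multiset.sum_add, Multiset.sum_replicate, smul_eq_mul]
    omega
  have himg_pos : ∀ p : n.Partition, P p → ∀ x ∈ img p, 0 < x := by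
    intro p hp x hx
    rcases Multiset.mem_add.mp hx with h | h
    · obtain ⟨y, hy, rfl⟩ := Multiset.mem_map.mp h
      exact gg_pos hM (p.parts_pos hy) (hp y hy)
    · rw [Multiset.eq_of_mem_replicate h]; omega
  have himg_cond : ∀ p : n.Partition, P p → ∀ x ∈ img p,
      x % (M - 1) = 2 % (M - 1) ∨ (x + 2) % (M - 1) = 0 := by
    intro p hp x hx
    rcases Multiset.mem_add.mp hx with h | h
    · obtain ⟨y, hy, rfl⟩ := Multiset.mem_map.mp h
      exact gg_mod hM (p.parts_pos hy) (hp y hy)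
    · rw [Multiset.eq_of_mem_replicate h]; left; rfl
  let F : {p : n.Partition // P p} →
      {p : n.Partition // ∀ x ∈ p.parts, x % (M - 1) = 2 % (M - 1) ∨ (x + 2) % (M - 1) = 0} :=
    fun p => ⟨⟨img p.1, fun hx => himg_pos p.1 p.2 _ hx, himg_sum p.1 p.2⟩,
      himg_cond p.1 p.2⟩
  apply Nat.card_le_card_of_injective F
  intro p1 p2 h
  have himg_eq : img p1.1 = img p2.1 := congrArg (fun q => q.1.parts) h
  -- general facts about filtering
  have hfil0 : ∀ (s : Multiset ℕ) (c : ℕ),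
      Multiset.filter (fun v => ¬ v = 2) (s.map (gg M) + Multiset.replicate c 2)
        = Multiset.filter (fun v => ¬ v = 2) (s.map (gg M)) := by
    intro s c
    rw [Multiset.filter_add]
    have h0 : Multiset.filter (fun v => ¬ v = 2) (Multiset.replicate c 2) = 0 :=
      Multiset.filter_eq_nil.mpr fun a ha => by
        rw [Multiset.eq_of_mem_replicate ha]; simp
    rw [h0, add_zero]
  have hfil2 : ∀ p : n.Partition, P p →
      Multiset.filter (fun v => ¬ v = 2) (p.parts.map (gg M))
        = (Multiset.filter (fun x => ¬ x = 2) p.parts).map (gg M) := by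
    intro p hp
    have : ∀ s : Multiset ℕ, (∀ x ∈ s, 0 < x ∧ (x % M = 2 % M ∨ (x + 2) % M = 0)) →
        Multiset.filter (fun v => ¬ v = 2) (s.map (gg M))
          = (Multiset.filter (fun x => ¬ x = 2) s).map (gg M) := by
      intro s
      induction s using Multiset.induction with
      | empty => simp
      | cons a s ih =>
        intro hs
        have ha := hs a (Multiset.mem_cons_self a s)
        have hiff := gg_eq_two_iff hM ha.1 ha.2
        rw [Multiset.map_cons, Multiset.filter_cons, Multiset.filter_cons,
          ih (fun x hx => hs x (Multiset.mem_cons_of_mem hx))]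
        by_cases h2 : a = 2
        · have hg2 : gg M a = 2 := hiff.mpr h2
          simp [h2, hg2, gg_two hM]
        · have hg2 : ¬ gg M a = 2 := fun hc => h2 (hiff.mp hc)
          simp [h2, hg2]
    exact this p.parts fun x hx => ⟨p.parts_pos hx, hp x hx⟩
  -- the non-2 parts agree
  have h1 := congrArg (Multiset.filter (fun v => ¬ v = 2)) himg_eq
  simp only [img] at h1
  rw [hfil0, hfil0, hfil2 p1.1 p1.2, hfil2 p2.1 p2.2] at h1
  have hrec : ∀ p : n.Partition, P p →
      Multiset.map (hh M) ((Multiset.filter (fun x => ¬ x = 2) p.parts).map (gg M))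
        = Multiset.filter (fun x => ¬ x = 2) p.parts := by
    intro p hp
    rw [Multiset.map_map]
    have := Multiset.map_congr (f := hh M ∘ gg M) (g := id)
      (s := Multiset.filter (fun x => ¬ x = 2) p.parts) rfl
      (fun x hx => hh_gg hM (p.parts_pos (Multiset.mem_of_mem_filter hx))
        (hp x (Multiset.mem_of_mem_filter hx)))
    rw [this, Multiset.map_id]
  have ht : Multiset.filter (fun x => ¬ x = 2) p1.1.parts
      = Multiset.filter (fun x => ¬ x = 2) p2.1.parts := by
    rw [← hrec p1.1 p1.2, ← hrec p2.1 p2.2, h1]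
  -- the deficits agree
  have hKfil : ∀ s : Multiset ℕ,
      (s.map (kk M)).sum = ((Multiset.filter (fun x => ¬ x = 2) s).map (kk M)).sum := by
    intro s
    induction s using Multiset.induction with
    | empty => simp
    | cons a s ih =>
      rw [Multiset.map_cons, Multiset.sum_cons, Multiset.filter_cons]
      by_cases h2 : a = 2
      · subst h2
        rw [kk_two hM, if_neg (by simp)]
        simpa using ih
      · rw [if_pos (by simpa using h2)]
        simp only [Multiset.map_add, Multiset.sum_add, Multiset.map_singleton,
          Multiset.sum_singleton]
        omega
  have hKeq : (p1.1.parts.map (kk M)).sum = (p2.1.parts.map (kk M)).sum := by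
    rw [hKfil p1.1.parts, hKfil p2.1.parts, ht]
  -- counts of 2 agree
  have hcmap : ∀ p : n.Partition, P p →
      Multiset.count 2 (p.parts.map (gg M)) = Multiset.count 2 p.parts := by
    intro p hp
    have : ∀ s : Multiset ℕ, (∀ x ∈ s, 0 < x ∧ (x % M = 2 % M ∨ (x + 2) % M = 0)) →
        Multiset.count 2 (s.map (gg M)) = Multiset.count 2 s := by
      intro s
      induction s using Multiset.induction with
      | empty => simp
      | cons a s ih =>
        intro hs
        have ha := hs a (Multiset.mem_cons_self a s)
        have hiff := gg_eq_two_iff hM ha.1 ha.2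
        rw [Multiset.map_cons, Multiset.count_cons, Multiset.count_cons,
          ih (fun x hx => hs x (Multiset.mem_cons_of_mem hx))]
        by_cases h2 : a = 2
        · have hg2 : gg M a = 2 := hiff.mpr h2
          simp [h2, hg2, gg_two hM]
        · have hg2 : ¬ gg M a = 2 := fun hc => h2 (hiff.mp hc)
          have hg2' : ¬ (2 : ℕ) = gg M a := fun hc => hg2 hc.symm
          have h2' : ¬ (2 : ℕ) = a := fun hc => h2 hc.symm
          simp [h2, hg2, hg2', h2']
    exact this p.parts fun x hx => ⟨p.parts_pos hx, hp x hx⟩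
  have hc := congrArg (Multiset.count 2) himg_eq
  simp only [img, Multiset.count_add, Multiset.count_replicate, if_pos rfl] at hc
  rw [hcmap p1.1 p1.2, hcmap p2.1 p2.2, hKeq] at hc
  have hcount : Multiset.count 2 p1.1.parts = Multiset.count 2 p2.1.parts := by omega
  -- reassemble
  have hsplit : ∀ s : Multiset ℕ,
      s = Multiset.replicate (Multiset.count 2 s) 2 + Multiset.filter (fun x => ¬ x = 2) s := by
    intro s
    conv_lhs => rw [← Multiset.filter_add_not (fun x => x = 2) s]
    rw [Multiset.filter_eq' s 2]
  apply Subtype.ext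
  apply Nat.Partition.ext
  rw [hsplit p1.1.parts, hsplit p2.1.parts, ht, hcount]

end QShiftAux

theorem Q_shift_even (d n : ℕ) (hd : 4 ≤ d) (hde : Even d) (hn : 0 < n) (hne : Even n) :
    QNum 2 d n ≤ QNum 2 (d - 1) n := by
  obtain ⟨e, rfl⟩ := hde
  unfold QNum
  have h1 : e + e - 1 + 3 = e + e + 3 - 1 := by omega
  rw [h1]
  exact QShiftAux.key (e + e + 3) n (by omega) (by omega) (Nat.even_iff.mp hne)
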